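/- Let ν₀ and ν₁ be probability measures on a measurable space 𝒳 and let h, h₀*, h₁* : 𝒳 → ℝ be measurable functions taking values in {0,1}. For a ∈ {0,1} and functions f, f' define ε_a(f, f') = ∫ |f(x) − f'(x)| dν_a(x). Then |ε₀(h, h₀*) − ε₁(h, h₁*)| ≤ min{ ε₀(h₀*, h₁*), ε₁(h₀*, h₁*) } + dTV(ν₀, ν₁). -/

import Mathlib

open MeasureTheory

/-- Total variation distance between two measures:
the supremum over measurable sets of the absolute difference of the probabilities. -/
noncomputable def dTV {𝒳 : Type*} [MeasurableSpace 𝒳] (P Q : Measure 𝒳) : ℝ :=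
  ⨆ E : {E : Set 𝒳 // MeasurableSet E}, |(P E.1).toReal - (Q E.1).toReal|

section aux

variable {𝒳 : Type*} [MeasurableSpace 𝒳]

lemma diffSet_measurable {g g' : 𝒳 → ℝ} (hg : Measurable g) (hg' : Measurable g') :
    MeasurableSet {x | g x ≠ g' x} := by
  have : {x | g x ≠ g' x} = (fun x => g x - g' x) ⁻¹' ({0}ᶜ) := by
    ext x; simp [sub_eq_zero]
  rw [this]
  exact (hg.sub hg') (measurableSet_singleton 0).compl

lemma abs_eq_indicator {g g' : 𝒳 → ℝ} (hg : ∀ x, g x = 0 ∨ g x = 1)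
    (hg' : ∀ x, g' x = 0 ∨ g' x = 1) (x : 𝒳) :
    |g x - g' x| = Set.indicator {y | g y ≠ g' y} (fun _ => (1:ℝ)) x := by
  by_cases hx : g x = g' x
  · simp [Set.indicator, hx]
  · rcases hg x with h1 | h1 <;> rcases hg' x with h2 | h2 <;>
      simp [Set.indicator, hx, h1, h2] at * <;> norm_num

lemma integral_abs_eq {g g' : 𝒳 → ℝ} (hg : Measurable g) (hg' : Measurable g')
    (hg01 : ∀ x, g x = 0 ∨ g x = 1) (hg'01 : ∀ x, g' x = 0 ∨ g' x = 1)
    (ν : Measure 𝒳) :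
    ∫ x, |g x - g' x| ∂ν = (ν {x | g x ≠ g' x}).toReal := by
  have : ∫ x, |g x - g' x| ∂ν
      = ∫ x, Set.indicator {y | g y ≠ g' y} (fun _ => (1:ℝ)) x ∂ν := by
    refine integral_congr_ae (Filter.Eventually.of_forall fun x => ?_)
    exact abs_eq_indicator hg01 hg'01 x
  rw [this]
  rw [integral_indicator (diffSet_measurable hg hg')]
  simp
  rfl

lemma toReal_triangle (ν : Measure 𝒳) [IsProbabilityMeasure ν]
    {g g' g'' : 𝒳 → ℝ} (hA : MeasurableSet {x | g x ≠ g' x}) :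
    (ν {x | g x ≠ g' x}).toReal ≤
      (ν {x | g x ≠ g'' x}).toReal + (ν {x | g'' x ≠ g' x}).toReal := by
  have hsub : {x | g x ≠ g' x} ⊆ {x | g x ≠ g'' x} ∪ {x | g'' x ≠ g' x} := by
    intro x hx
    by_cases h1 : g x = g'' x
    · right; intro h2; exact hx (h1.trans h2)
    · left; exact h1
  have h1 : ν {x | g x ≠ g' x} ≤ ν {x | g x ≠ g'' x} + ν {x | g'' x ≠ g' x} :=
    le_trans (measure_mono hsub) (measure_union_le _ _)
  have hf1 : ν {x | g x ≠ g'' x} ≠ ⊤ := measure_ne_top ν _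
  have hf2 : ν {x | g'' x ≠ g' x} ≠ ⊤ := measure_ne_top ν _
  calc (ν {x | g x ≠ g' x}).toReal
      ≤ (ν {x | g x ≠ g'' x} + ν {x | g'' x ≠ g' x}).toReal := by
        exact ENNReal.toReal_mono (by finiteness) h1
    _ = (ν {x | g x ≠ g'' x}).toReal + (ν {x | g'' x ≠ g' x}).toReal :=
        ENNReal.toReal_add hf1 hf2

lemma le_dTV (ν₀ ν₁ : Measure 𝒳) [IsProbabilityMeasure ν₀] [IsProbabilityMeasure ν₁]
    {E : Set 𝒳} (hE : MeasurableSet E) :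
    (ν₀ E).toReal - (ν₁ E).toReal ≤ dTV ν₀ ν₁ := by
  have hb : BddAbove (Set.range fun E : {E : Set 𝒳 // MeasurableSet E} =>
      |(ν₀ E.1).toReal - (ν₁ E.1).toReal|) := by
    refine ⟨2, ?_⟩
    rintro r ⟨F, rfl⟩
    have h0 : (ν₀ F.1).toReal ≤ 1 := by
      simpa using ENNReal.toReal_mono (by finiteness) (prob_le_one (μ := ν₀) (s := F.1))
    have h1 : (ν₁ F.1).toReal ≤ 1 := by
      simpa using ENNReal.toReal_mono (by finiteness) (prob_le_one (μ := ν₁) (s := F.1))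
    have h0' : 0 ≤ (ν₀ F.1).toReal := ENNReal.toReal_nonneg
    have h1' : 0 ≤ (ν₁ F.1).toReal := ENNReal.toReal_nonneg
    rw [abs_le]; constructor <;> linarith
  calc (ν₀ E).toReal - (ν₁ E).toReal ≤ |(ν₀ E).toReal - (ν₁ E).toReal| := le_abs_self _
    _ ≤ dTV ν₀ ν₁ := le_ciSup hb ⟨E, hE⟩

end aux

/-- The difference between the expected disagreements `ε₀(h, h₀*)` and `ε₁(h, h₁*)`
is bounded by the minimal disagreement between the reference functions plus the
total variation distance between the two input distributions. -/
theorem disagreement_difference_bound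
    {𝒳 : Type*} [MeasurableSpace 𝒳]
    (ν₀ ν₁ : Measure 𝒳) [IsProbabilityMeasure ν₀] [IsProbabilityMeasure ν₁]
    (h h₀ h₁ : 𝒳 → ℝ) (hh : Measurable h) (hh₀ : Measurable h₀) (hh₁ : Measurable h₁)
    (hh01 : ∀ x, h x = 0 ∨ h x = 1) (hh₀01 : ∀ x, h₀ x = 0 ∨ h₀ x = 1)
    (hh₁01 : ∀ x, h₁ x = 0 ∨ h₁ x = 1) :
    |(∫ x, |h x - h₀ x| ∂ν₀) - ∫ x, |h x - h₁ x| ∂ν₁| ≤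
      min (∫ x, |h₀ x - h₁ x| ∂ν₀) (∫ x, |h₀ x - h₁ x| ∂ν₁) + dTV ν₀ ν₁ := by
  rw [integral_abs_eq hh hh₀ hh01 hh₀01, integral_abs_eq hh hh₁ hh01 hh₁01,
    integral_abs_eq hh₀ hh₁ hh₀01 hh₁01, integral_abs_eq hh₀ hh₁ hh₀01 hh₁01]
  set A00 := (ν₀ {x | h x ≠ h₀ x}).toReal with hA00
  set A11 := (ν₁ {x | h x ≠ h₁ x}).toReal with hA11
  -- bounds via triangle and dTV
  have hd01 : (ν₀ {x | h x ≠ h₁ x}).toReal - (ν₁ {x | h x ≠ h₁ x}).toReal ≤ dTV ν₀ ν₁ :=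
    le_dTV ν₀ ν₁ (diffSet_measurable hh hh₁)
  have hd10 : (ν₁ {x | h x ≠ h₀ x}).toReal - (ν₀ {x | h x ≠ h₀ x}).toReal ≤ dTV ν₀ ν₁ := by
    have := le_dTV ν₀ ν₁ (hE := (diffSet_measurable hh hh₀).compl)
    have h0 : (ν₀ {x | h x ≠ h₀ x}ᶜ).toReal = 1 - (ν₀ {x | h x ≠ h₀ x}).toReal := by
      rw [measure_compl (diffSet_measurable hh hh₀) (measure_ne_top _ _), measure_univ,
        ENNReal.toReal_sub_of_le prob_le_one (by simp)]
      simp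
    have h1 : (ν₁ {x | h x ≠ h₀ x}ᶜ).toReal = 1 - (ν₁ {x | h x ≠ h₀ x}).toReal := by
      rw [measure_compl (diffSet_measurable hh hh₀) (measure_ne_top _ _), measure_univ,
        ENNReal.toReal_sub_of_le prob_le_one (by simp)]
      simp
    rw [h0, h1] at this
    linarith
  have hd01' : (ν₁ {x | h x ≠ h₁ x}).toReal - (ν₀ {x | h x ≠ h₁ x}).toReal ≤ dTV ν₀ ν₁ := by
    have := le_dTV ν₀ ν₁ (hE := (diffSet_measurable hh hh₁).compl)
    have h0 : (ν₀ {x | h x ≠ h₁ x}ᶜ).toReal = 1 - (ν₀ {x | h x ≠ h₁ x}).toReal := by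
      rw [measure_compl (diffSet_measurable hh hh₁) (measure_ne_top _ _), measure_univ,
        ENNReal.toReal_sub_of_le prob_le_one (by simp)]
      simp
    have h1 : (ν₁ {x | h x ≠ h₁ x}ᶜ).toReal = 1 - (ν₁ {x | h x ≠ h₁ x}).toReal := by
      rw [measure_compl (diffSet_measurable hh hh₁) (measure_ne_top _ _), measure_univ,
        ENNReal.toReal_sub_of_le prob_le_one (by simp)]
      simp
    rw [h0, h1] at this
    linarith
  have hd10' : (ν₀ {x | h x ≠ h₀ x}).toReal - (ν₁ {x | h x ≠ h₀ x}).toReal ≤ dTV ν₀ ν₁ :=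
    le_dTV ν₀ ν₁ (diffSet_measurable hh hh₀)
  -- triangle inequalities
  have t00 : (ν₀ {x | h x ≠ h₀ x}).toReal ≤
      (ν₀ {x | h x ≠ h₁ x}).toReal + (ν₀ {x | h₁ x ≠ h₀ x}).toReal :=
    toReal_triangle ν₀ (diffSet_measurable hh hh₀)
  have t01 : (ν₀ {x | h x ≠ h₁ x}).toReal ≤
      (ν₀ {x | h x ≠ h₀ x}).toReal + (ν₀ {x | h₀ x ≠ h₁ x}).toReal :=
    toReal_triangle ν₀ (diffSet_measurable hh hh₁)
  have t10 : (ν₁ {x | h x ≠ h₀ x}).toReal ≤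
      (ν₁ {x | h x ≠ h₁ x}).toReal + (ν₁ {x | h₁ x ≠ h₀ x}).toReal :=
    toReal_triangle ν₁ (diffSet_measurable hh hh₀)
  have t11 : (ν₁ {x | h x ≠ h₁ x}).toReal ≤
      (ν₁ {x | h x ≠ h₀ x}).toReal + (ν₁ {x | h₀ x ≠ h₁ x}).toReal :=
    toReal_triangle ν₁ (diffSet_measurable hh hh₁)
  -- symmetry of ≠ sets
  have hsym0 : {x | h₁ x ≠ h₀ x} = {x | h₀ x ≠ h₁ x} := by ext x; exact ⟨Ne.symm, Ne.symm⟩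
  rw [hsym0] at t00 t10
  rw [abs_le]
  constructor
  · rw [neg_le, neg_sub, ← min_add_add_right, le_min_iff]
    exact ⟨by linarith, by linarith⟩
  · rw [← min_add_add_right, le_min_iff]
    exact ⟨by linarith, by linarith⟩
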